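/- Let k ≥ 2 be an integer, y ∈ ℝⁿ with |y| < 1, and let W be the vector field W(x) = -(1/k)·(((1-2⟨x,y⟩+|y|²)/|x-y|²)^{k/2} - 1)·(x-y) + (1/(k-2))·(((1-2⟨x,y⟩+|y|²)/|x-y|²)^{(k-2)/2} - 1)·y for k > 2, and W(x) = -(1/2)·((1-2⟨x,y⟩+|y|²)/|x-y|² - 1)·(x-y) + (1/2)·log((1-2⟨x,y⟩+|y|²)/|x-y|²)·y for k = 2. Then for every x in the open unit ball with x ≠ y and every orthonormal family e₁,…,e_k in ℝⁿ, the trace ∑_{i=1}^k ⟨D_{e_i} W(x), e_i⟩ ≤ 1, where D_{e_i} W denotes the directional derivative of W in direction e_i. -/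

import Mathlib

set_option maxHeartbeats 1000000

open scoped InnerProductSpace

theorem stmt_4 (n k : ℕ) (hk : 2 ≤ k) (y : EuclideanSpace ℝ (Fin n)) (hy : ‖y‖ < 1)
    (W : EuclideanSpace ℝ (Fin n) → EuclideanSpace ℝ (Fin n))
    (hWgt : 2 < k → ∀ x, W x =
      (-(1 / (k : ℝ)) * (((1 - 2 * ⟪x, y⟫_ℝ + ‖y‖ ^ 2) / ‖x - y‖ ^ 2) ^ ((k : ℝ) / 2) - 1)) • (x - y)
      + ((1 / ((k : ℝ) - 2)) * (((1 - 2 * ⟪x, y⟫_ℝ + ‖y‖ ^ 2) / ‖x - y‖ ^ 2) ^ (((k : ℝ) - 2) / 2) - 1)) • y)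
    (hWeq : k = 2 → ∀ x, W x =
      (-(1 / 2 : ℝ) * ((1 - 2 * ⟪x, y⟫_ℝ + ‖y‖ ^ 2) / ‖x - y‖ ^ 2 - 1)) • (x - y)
      + ((1 / 2 : ℝ) * Real.log ((1 - 2 * ⟪x, y⟫_ℝ + ‖y‖ ^ 2) / ‖x - y‖ ^ 2)) • y)
    (x : EuclideanSpace ℝ (Fin n)) (hx : ‖x‖ < 1) (hxy : x ≠ y)
    (e : Fin k → EuclideanSpace ℝ (Fin n)) (he : Orthonormal ℝ e) :
    ∑ i, ⟪fderiv ℝ W x (e i), e i⟫_ℝ ≤ 1 := by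
  have hxy0 : x - y ≠ 0 := sub_ne_zero.mpr hxy
  have hS : (0:ℝ) < ‖x - y‖ ^ 2 := by
    have : ‖x - y‖ ≠ 0 := norm_ne_zero_iff.mpr hxy0
    positivity
  have hQ : (0:ℝ) < 1 - 2 * ⟪x, y⟫_ℝ + ‖y‖ ^ 2 := by
    have h1 : ‖x - y‖ ^ 2 = ‖x‖ ^ 2 - 2 * ⟪x, y⟫_ℝ + ‖y‖ ^ 2 := norm_sub_sq_real x y
    nlinarith [norm_nonneg x]
  set u : EuclideanSpace ℝ (Fin n) → ℝ :=
    fun x' => (1 - 2 * ⟪x', y⟫_ℝ + ‖y‖ ^ 2) / ‖x' - y‖ ^ 2 with hu_def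
  set U : ℝ := (1 - 2 * ⟪x, y⟫_ℝ + ‖y‖ ^ 2) / ‖x - y‖ ^ 2 with hU_def
  have hU : 0 < U := div_pos hQ hS
  have hk0 : ((k:ℝ)) ≠ 0 := by
    have : (2:ℝ) ≤ (k:ℝ) := by exact_mod_cast hk
    linarith
  -- derivative of u at x
  have hid : HasFDerivAt (fun x' : EuclideanSpace ℝ (Fin n) => x' - y)
      (ContinuousLinearMap.id ℝ _) x := (hasFDerivAt_id x).sub_const y
  obtain ⟨uL, hu, huL⟩ : ∃ uL : EuclideanSpace ℝ (Fin n) →L[ℝ] ℝ, HasFDerivAt u uL x ∧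
      ∀ v, uL v = -(2 / ‖x - y‖ ^ 2) * (⟪y, v⟫_ℝ + U * ⟪x - y, v⟫_ℝ) := by
    have hurw : u = fun x' => (1 - 2 * ⟪y, x'⟫_ℝ + ‖y‖ ^ 2) * (⟪x' - y, x' - y⟫_ℝ)⁻¹ := by
      funext v
      simp only [hu_def]
      rw [real_inner_comm v y, show ‖v - y‖ ^ 2 = ⟪v - y, v - y⟫_ℝ from (real_inner_self_eq_norm_sq _).symm, div_eq_mul_inv]
    have hSd : ⟪x - y, x - y⟫_ℝ ≠ 0 := by
      rw [real_inner_self_eq_norm_sq]; exact ne_of_gt hS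
    have hNum := ((((hasFDerivAt_const y x).inner ℝ (hasFDerivAt_id x)).const_mul
      (2:ℝ)).const_sub (1:ℝ)).add_const (‖y‖ ^ 2)
    have hden := (hid.inner ℝ hid)
    have hinv := (hasDerivAt_inv hSd).comp_hasFDerivAt x hden
    have hprod := hNum.mul hinv
    refine ⟨_, by rw [hurw]; exact hprod, ?_⟩
    intro v
    simp only [ContinuousLinearMap.add_apply, ContinuousLinearMap.smul_apply,
      ContinuousLinearMap.smulRight_apply, ContinuousLinearMap.comp_apply,
      ContinuousLinearMap.prod_apply, fderivInnerCLM_apply, ContinuousLinearMap.id_apply,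
      ContinuousLinearMap.zero_apply, ContinuousLinearMap.coe_smul', Pi.smul_apply,
      smul_eq_mul, ContinuousLinearMap.sub_apply, ContinuousLinearMap.neg_apply,
      inner_zero_right, inner_zero_left, add_zero, zero_add, Function.comp, id_eq]
    rw [real_inner_comm (x - y) v, hU_def, real_inner_comm x y]
    rw [show ⟪x - y, x - y⟫_ℝ = ‖x - y‖ ^ 2 from real_inner_self_eq_norm_sq _]
    field_simp
    ring
  -- derivative of the (x'-y)-coefficient
  have hUne : u x ≠ 0 := ne_of_gt hU
  have hφ : HasDerivAt (fun t : ℝ => -(1 / (k:ℝ)) * (t ^ ((k:ℝ)/2) - 1))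
      (-(1/2) * U ^ (((k:ℝ) - 2)/2)) U := by
    have h := ((Real.hasDerivAt_rpow_const (x := U) (p := (k:ℝ)/2)
      (Or.inl hU.ne')).sub_const 1).const_mul (-(1 / (k:ℝ)))
    refine h.congr_deriv ?_
    rw [show ((k:ℝ) - 2)/2 = (k:ℝ)/2 - 1 from by ring]
    field_simp
  have hA : HasFDerivAt (fun x' => -(1 / (k:ℝ)) * ((u x') ^ ((k:ℝ)/2) - 1))
      ((-(1/2) * U ^ (((k:ℝ) - 2)/2)) • uL) x := hφ.comp_hasFDerivAt (f := u) x hu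
  -- the y-coefficient, case split
  obtain ⟨g, hWg, hg⟩ : ∃ g : EuclideanSpace ℝ (Fin n) → ℝ,
      (∀ x', W x' = (-(1 / (k:ℝ)) * ((u x') ^ ((k:ℝ)/2) - 1)) • (x' - y) + g x' • y) ∧
      HasFDerivAt g (((1:ℝ)/2 * U ^ (((k:ℝ) - 4)/2)) • uL) x := by
    rcases lt_or_eq_of_le hk with hklt | hkeq
    · refine ⟨fun x' => (1 / ((k:ℝ) - 2)) * ((u x') ^ (((k:ℝ) - 2)/2) - 1),
        fun x' => hWgt hklt x', ?_⟩
      have hψ : HasDerivAt (fun t : ℝ => (1 / ((k:ℝ) - 2)) * (t ^ (((k:ℝ) - 2)/2) - 1))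
          ((1:ℝ)/2 * U ^ (((k:ℝ) - 4)/2)) U := by
        have h := ((Real.hasDerivAt_rpow_const (x := U) (p := ((k:ℝ) - 2)/2)
          (Or.inl hU.ne')).sub_const 1).const_mul (1 / ((k:ℝ) - 2))
        refine h.congr_deriv ?_
        have hk2' : (2:ℝ) < (k:ℝ) := by exact_mod_cast hklt
        have hkne : (k:ℝ) - 2 ≠ 0 := by linarith
        rw [show ((k:ℝ) - 4)/2 = ((k:ℝ) - 2)/2 - 1 from by ring]
        field_simp
      exact hψ.comp_hasFDerivAt (f := u) x hu
    · subst hkeq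
      refine ⟨fun x' => (1/2 : ℝ) * Real.log (u x'), ?_, ?_⟩
      · intro x'
        rw [hWeq rfl x']
        simp only [hu_def]
        norm_num [show ((2:ℕ):ℝ)/2 = 1 from by norm_num, Real.rpow_one]
      · have hlog : HasDerivAt (fun t : ℝ => (1/2 : ℝ) * Real.log t) ((1/2 : ℝ) * U⁻¹) U :=
          (Real.hasDerivAt_log hU.ne').const_mul (1/2 : ℝ)
        have := hlog.comp_hasFDerivAt x hu
        rw [show (((2:ℕ):ℝ) - 4)/2 = -1 from by norm_num, Real.rpow_neg_one]
        exact this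
  have hWfun : W = fun x' =>
      (-(1 / (k:ℝ)) * ((u x') ^ ((k:ℝ)/2) - 1)) • (x' - y) + g x' • y := funext hWg
  have hWd : HasFDerivAt (fun x' =>
      (-(1 / (k:ℝ)) * ((u x') ^ ((k:ℝ)/2) - 1)) • (x' - y) + g x' • y)
      (((-(1 / (k:ℝ)) * (U ^ ((k:ℝ)/2) - 1)) • ContinuousLinearMap.id ℝ _ +
        ((-(1/2) * U ^ (((k:ℝ) - 2)/2)) • uL).smulRight (x - y)) +
        (g x • (0 : EuclideanSpace ℝ (Fin n) →L[ℝ] EuclideanSpace ℝ (Fin n)) +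
          (((1:ℝ)/2 * U ^ (((k:ℝ) - 4)/2)) • uL).smulRight y)) x :=
    (hA.smul hid).add (hg.smul (hasFDerivAt_const y x))
  set T : ℝ := U ^ (((k:ℝ) - 4)/2) with hT
  have hT0 : 0 < T := Real.rpow_pos_of_pos hU _
  have hT2 : T * U = U ^ (((k:ℝ) - 2)/2) := by
    rw [hT, ← Real.rpow_add_one hU.ne', show ((k:ℝ) - 4)/2 + 1 = ((k:ℝ) - 2)/2 from by ring]
  have hself : ∀ i, ⟪e i, e i⟫_ℝ = (1:ℝ) := fun i => by
    rw [real_inner_self_eq_norm_sq, he.1 i]; norm_num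
  have hBessel : ∑ i, ⟪x - y, e i⟫_ℝ ^ 2 ≤ ‖x - y‖ ^ 2 := by
    calc ∑ i, ⟪x - y, e i⟫_ℝ ^ 2 = ∑ i, ‖⟪e i, x - y⟫_ℝ‖ ^ 2 := by
          refine Finset.sum_congr rfl fun i _ => ?_
          rw [real_inner_comm, Real.norm_eq_abs, sq_abs]
      _ ≤ ‖x - y‖ ^ 2 := he.sum_inner_products_le (x - y)
  calc ∑ i, ⟪fderiv ℝ W x (e i), e i⟫_ℝ
      = ∑ i, (-(1 / (k:ℝ)) * (U ^ ((k:ℝ)/2) - 1)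
          + T * U ^ 2 / ‖x - y‖ ^ 2 * ⟪x - y, e i⟫_ℝ ^ 2
          - T * ⟪y, e i⟫_ℝ ^ 2 / ‖x - y‖ ^ 2) := by
        rw [hWfun, hWd.fderiv]
        refine Finset.sum_congr rfl fun i _ => ?_
        simp only [ContinuousLinearMap.add_apply, ContinuousLinearMap.smul_apply,
          ContinuousLinearMap.smulRight_apply, ContinuousLinearMap.id_apply,
          ContinuousLinearMap.zero_apply, smul_zero, zero_add, inner_add_left,
          real_inner_smul_left, smul_eq_mul, huL, hself]
        rw [← hT2]
        field_simp
        ring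
    _ ≤ ∑ i, (-(1 / (k:ℝ)) * (U ^ ((k:ℝ)/2) - 1)
          + T * U ^ 2 / ‖x - y‖ ^ 2 * ⟪x - y, e i⟫_ℝ ^ 2) := by
        refine Finset.sum_le_sum fun i _ => ?_
        have h0 : (0:ℝ) ≤ T * ⟪y, e i⟫_ℝ ^ 2 / ‖x - y‖ ^ 2 :=
          div_nonneg (mul_nonneg hT0.le (sq_nonneg _)) hS.le
        exact sub_le_self _ h0
    _ = (k:ℝ) * (-(1 / (k:ℝ)) * (U ^ ((k:ℝ)/2) - 1))
          + T * U ^ 2 / ‖x - y‖ ^ 2 * ∑ i, ⟪x - y, e i⟫_ℝ ^ 2 := by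
        rw [Finset.sum_add_distrib, Finset.sum_const, Finset.card_univ,
          Fintype.card_fin, nsmul_eq_mul, ← Finset.mul_sum]
    _ ≤ (k:ℝ) * (-(1 / (k:ℝ)) * (U ^ ((k:ℝ)/2) - 1))
          + T * U ^ 2 / ‖x - y‖ ^ 2 * ‖x - y‖ ^ 2 := by
        have hC : (0:ℝ) ≤ T * U ^ 2 / ‖x - y‖ ^ 2 :=
          div_nonneg (mul_nonneg hT0.le (sq_nonneg _)) hS.le
        exact add_le_add le_rfl (mul_le_mul_of_nonneg_left hBessel hC)
    _ = 1 := by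
        rw [div_mul_cancel₀ _ (ne_of_gt hS)]
        have hTU2 : T * U ^ 2 = U ^ ((k:ℝ)/2) := by
          rw [hT, ← Real.rpow_natCast U 2, ← Real.rpow_add hU,
            show ((k:ℝ) - 4)/2 + ((2:ℕ):ℝ) = (k:ℝ)/2 from by push_cast; ring]
        rw [hTU2]
        field_simp
        ring
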